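/- Let (U(t,s))_{t≥s} be a 1-periodic strongly continuous evolutionary process on a complex Banach space X and let Λ be a closed subset of the unit circle Γ. Suppose (u_n), (f_n) ⊂ BC(ℝ,X) satisfy σ(u_n) ⊂ Λ and σ(f_n) ⊂ Λ for all n, each u_n is a mild solution with forcing term f_n (i.e. u_n(t) = U(t,s)u_n(s) + ∫_s^t U(t,ξ) f_n(ξ) dξ for all t ≥ s), and u_n → u, f_n → f in the sup norm with u, f ∈ BC(ℝ,X). Then σ(u) ⊂ Λ, σ(f) ⊂ Λ, and u is a mild solution with forcing term f, i.e. u(t) = U(t,s)u(s) + ∫_s^t U(t,ξ) f(ξ) dξ for all t ≥ s. (Equivalently, the restriction of the operator L, defined by Lu = f whenever the mild-solution relation holds, to { g ∈ BC(ℝ,X) : σ(g) ⊂ Λ } is a closed operator.) -/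

import Mathlib

open MeasureTheory Complex Metric BoundedContinuousFunction

noncomputable section

/-- The space `L^∞(ℝ, X)` of (classes of) essentially bounded strongly measurable functions. -/
abbrev Linf (X : Type*) [NormedAddCommGroup X] : Type _ := Lp X ⊤ (volume : Measure ℝ)

variable (X : Type*) [NormedAddCommGroup X] [NormedSpace ℂ X] [CompleteSpace X]

/-- The translation operator `S` on `L^∞(ℝ,X)`, `(S g)(t) = g (t + 1)`. -/
def transOp : Linf X →L[ℂ] Linf X :=
  (Lp.compMeasurePreservingₗᵢ ℂ (fun t : ℝ => t + 1)
    (measurePreserving_add_right volume 1)).toContinuousLinearMap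

/-- The circular spectrum of `g ∈ L^∞(ℝ,X)`: the set of points `ξ₀` of the unit circle `Γ`
such that `λ ↦ R(λ,S) g` admits no analytic extension to any neighborhood of `ξ₀`. -/
def circSpec (g : Linf X) : Set ℂ :=
  {ξ | ‖ξ‖ = 1 ∧ ¬∃ (U : Set ℂ) (F : ℂ → Linf X), IsOpen U ∧ ξ ∈ U ∧
    AnalyticOnNhd ℂ F U ∧ ∀ lam ∈ U, ‖lam‖ ≠ 1 → F lam = resolvent (transOp X) lam g}

/-- A bounded continuous function, viewed as an element of `L^∞(ℝ,X)`. -/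
def bcToLinf (f : ℝ →ᵇ X) : Linf X :=
  (memLp_top_of_bound f.continuous.aestronglyMeasurable ‖f‖
    (Filter.Eventually.of_forall fun t => f.norm_coe_le_norm t)).toLp f

/-- Restriction of a continuous linear operator to an invariant submodule. -/
def restrictCLM {E : Type*} [NormedAddCommGroup E] [NormedSpace ℂ E]
    (f : E →L[ℂ] E) (p : Submodule ℂ E) (h : ∀ x ∈ p, f x ∈ p) : p →L[ℂ] p where
  toFun x := ⟨f x, h x x.2⟩
  map_add' x y := by ext; simp
  map_smul' c x := by ext; simp
  cont := Continuous.subtype_mk (f.continuous.comp continuous_subtype_val) _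

/-- The translation operator `S` on `BC(ℝ,X)`, `(S g)(t) = g (t + 1)`. -/
def transBC : (ℝ →ᵇ X) →L[ℂ] (ℝ →ᵇ X) :=
  LinearMap.mkContinuous
    { toFun := fun g => g.compContinuous ⟨fun t => t + 1, by continuity⟩
      map_add' := fun g h => by ext t; simp
      map_smul' := fun c g => by ext t; simp }
    1 (fun g => by
      simpa using g.norm_compContinuous_le ⟨fun t => t + 1, by continuity⟩)

/-- The translation `S(τ)` on `BC(ℝ,X)`, `(S(τ) g)(t) = g (t + τ)`. -/
def translateBC (τ : ℝ) (g : ℝ →ᵇ X) : ℝ →ᵇ X :=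
  g.compContinuous ⟨fun t => t + τ, by continuity⟩

/-- A 1-periodic strongly continuous evolutionary process on `X`. -/
structure EvolProcess (X : Type*) [NormedAddCommGroup X] [NormedSpace ℂ X] where
  U : ℝ → ℝ → X →L[ℂ] X
  idem : ∀ t : ℝ, U t t = ContinuousLinearMap.id ℂ X
  comp : ∀ r s t : ℝ, r ≤ s → s ≤ t → (U t s).comp (U s r) = U t r
  strongCont : ∀ x : X, ContinuousOn (fun p : ℝ × ℝ => U p.1 p.2 x) {p : ℝ × ℝ | p.2 ≤ p.1}
  periodic : ∀ t s : ℝ, U (t + 1) (s + 1) = U t s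
  bound : ∃ N ω : ℝ, 0 < N ∧ 0 < ω ∧ ∀ t s : ℝ, s ≤ t → ‖U t s‖ ≤ N * Real.exp (ω * (t - s))

set_option linter.unusedSectionVars false
set_option linter.unusedVariables false
set_option maxHeartbeats 1000000

def transOpAux (a : ℝ) : Linf X →L[ℂ] Linf X :=
  (Lp.compMeasurePreservingₗᵢ ℂ (fun t : ℝ => t + a)
    (measurePreserving_add_right volume a)).toContinuousLinearMap

lemma transOpAux_comp (a b : ℝ) (g : Linf X) :
    transOpAux X a (transOpAux X b g) = transOpAux X (a + b) g := by
  apply Lp.ext ?_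
  have h1 := Lp.coeFn_compMeasurePreserving (E := X) (f := fun t : ℝ => t + a)
    (transOpAux X b g) (measurePreserving_add_right volume a)
  have h2 := Lp.coeFn_compMeasurePreserving (E := X) (f := fun t : ℝ => t + b)
    g (measurePreserving_add_right volume b)
  have h3 := (measurePreserving_add_right (volume : Measure ℝ) a).quasiMeasurePreserving.ae_eq_comp h2
  have h4 := Lp.coeFn_compMeasurePreserving (E := X) (f := fun t : ℝ => t + (a + b))
    g (measurePreserving_add_right volume (a + b))
  refine h1.trans (h3.trans ?_) |>.trans h4.symm
  · filter_upwards with t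
    simp [Function.comp, add_assoc, add_comm b a]

set_option linter.unusedSectionVars false
set_option maxHeartbeats 1000000

lemma transOpAux_zero (g : Linf X) : transOpAux X 0 g = g := by
  apply Lp.ext ?_
  have h1 := Lp.coeFn_compMeasurePreserving (E := X) (f := fun t : ℝ => t + (0:ℝ))
    g (measurePreserving_add_right volume 0)
  refine h1.trans ?_
  filter_upwards with t; simp

lemma transOp_eq_aux : transOp X = transOpAux X 1 := rfl

lemma norm_transOpAux_apply (a : ℝ) (g : Linf X) : ‖transOpAux X a g‖ = ‖g‖ :=
  Lp.norm_compMeasurePreserving _ _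

lemma norm_transOpAux_le (a : ℝ) : ‖transOpAux X a‖ ≤ 1 := by
  refine ContinuousLinearMap.opNorm_le_bound _ zero_le_one fun g => ?_
  rw [norm_transOpAux_apply, one_mul]

def transOpUnit : (Linf X →L[ℂ] Linf X)ˣ where
  val := transOp X
  inv := transOpAux X (-1)
  val_inv := by
    ext g
    simp only [ContinuousLinearMap.mul_apply, ContinuousLinearMap.one_apply, transOp_eq_aux]
    rw [transOpAux_comp, add_neg_cancel, transOpAux_zero]
  inv_val := by
    ext g
    simp only [ContinuousLinearMap.mul_apply, ContinuousLinearMap.one_apply, transOp_eq_aux]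
    rw [transOpAux_comp, neg_add_cancel, transOpAux_zero]


section GeneralRing
variable {A : Type*} [NormedRing A] [NormedAlgebra ℂ A] [CompleteSpace A]

lemma isUnit_algebraMap_sub_of_isometry (S : Aˣ) (hS : ‖(S : A)‖ ≤ 1)
    (hSinv : ‖((S⁻¹ : Aˣ) : A)‖ ≤ 1) (lam : ℂ) (h : ‖lam‖ ≠ 1) :
    IsUnit (algebraMap ℂ A lam - (S : A)) := by
  rcases lt_or_gt_of_ne h with hlt | hgt
  · have hn : ‖lam • ((S⁻¹ : Aˣ) : A)‖ < 1 := by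
      calc ‖lam • ((S⁻¹ : Aˣ) : A)‖ = ‖lam‖ * ‖((S⁻¹ : Aˣ) : A)‖ := norm_smul _ _
        _ ≤ ‖lam‖ * 1 := by gcongr
        _ < 1 := by simpa using hlt
    have hu : IsUnit ((1 : A) - lam • ((S⁻¹ : Aˣ) : A)) := (Units.oneSub _ hn).isUnit
    have key : algebraMap ℂ A lam - (S : A)
        = -((S : A) * ((1 : A) - lam • ((S⁻¹ : Aˣ) : A))) := by
      rw [mul_sub, mul_one, mul_smul_comm, S.mul_inv, Algebra.algebraMap_eq_smul_one]
      abel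
    rw [key]
    exact (S.isUnit.mul hu).neg
  · have hlam : lam ≠ 0 := by
      intro h0; rw [h0, norm_zero] at hgt; linarith
    have hn : ‖lam⁻¹ • (S : A)‖ < 1 := by
      calc ‖lam⁻¹ • (S : A)‖ = ‖lam⁻¹‖ * ‖(S : A)‖ := norm_smul _ _
        _ ≤ ‖lam⁻¹‖ * 1 := by gcongr
        _ < 1 := by
            rw [mul_one, norm_inv, inv_lt_one_iff₀]; right; exact hgt
    have hu : IsUnit ((1 : A) - lam⁻¹ • (S : A)) := (Units.oneSub _ hn).isUnit
    have ha : IsUnit (algebraMap ℂ A lam) := (IsUnit.mk0 lam hlam).map (algebraMap ℂ A)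
    have key : algebraMap ℂ A lam - (S : A)
        = algebraMap ℂ A lam * ((1 : A) - lam⁻¹ • (S : A)) := by
      rw [mul_sub, mul_one, Algebra.algebraMap_eq_smul_one, smul_mul_assoc, one_mul,
        smul_smul, mul_inv_cancel₀ hlam, one_smul]
    rw [key]
    exact ha.mul hu

end GeneralRing

lemma transOpUnit_val : ((transOpUnit X : (Linf X →L[ℂ] Linf X)ˣ) : Linf X →L[ℂ] Linf X) = transOp X := rfl

lemma transOpUnit_inv_val :
    (((transOpUnit X)⁻¹ : (Linf X →L[ℂ] Linf X)ˣ) : Linf X →L[ℂ] Linf X) = transOpAux X (-1) := rfl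

lemma mem_resolventSet (lam : ℂ) (h : ‖lam‖ ≠ 1) :
    lam ∈ resolventSet ℂ (transOp X) := by
  have := isUnit_algebraMap_sub_of_isometry (transOpUnit X)
    (by rw [transOpUnit_val]; exact norm_transOpAux_le X 1)
    (by rw [transOpUnit_inv_val]; exact norm_transOpAux_le X (-1)) lam h
  rwa [transOpUnit_val] at this

lemma norm_resolvent_apply_le (lam : ℂ) (h : ‖lam‖ ≠ 1) (g : Linf X) :
    ‖resolvent (transOp X) lam g‖ ≤ ‖g‖ / |‖lam‖ - 1| := by
  have hmem := mem_resolventSet X lam h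
  have habs : 0 < |‖lam‖ - 1| := abs_pos.mpr (sub_ne_zero.mpr h)
  rw [le_div_iff₀ habs]
  have hmul : (algebraMap ℂ (Linf X →L[ℂ] Linf X) lam - transOp X) * resolvent (transOp X) lam = 1 :=
    Ring.mul_inverse_cancel _ hmem
  have happ : (algebraMap ℂ (Linf X →L[ℂ] Linf X) lam - transOp X) (resolvent (transOp X) lam g) = g := by
    have := congrArg (fun T : Linf X →L[ℂ] Linf X => T g) hmul
    simpa [ContinuousLinearMap.mul_apply] using this
  set y := resolvent (transOp X) lam g with hy
  have hexp : (algebraMap ℂ (Linf X →L[ℂ] Linf X) lam - transOp X) y = lam • y - transOp X y := by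
    simp [Algebra.algebraMap_eq_smul_one, ContinuousLinearMap.sub_apply]
  have h2 : ‖transOp X y‖ = ‖y‖ := norm_transOpAux_apply X 1 y
  have hlow : |‖lam‖ - 1| * ‖y‖ ≤ ‖g‖ := by
    calc |‖lam‖ - 1| * ‖y‖ = |(‖lam‖ - 1) * ‖y‖| := by
          rw [abs_mul, _root_.abs_of_nonneg (norm_nonneg y)]
      _ = |‖lam • y‖ - ‖transOp X y‖| := by rw [norm_smul, h2]; ring_nf
      _ ≤ ‖lam • y - transOp X y‖ := abs_norm_sub_norm_le _ _
      _ = ‖g‖ := by rw [← hexp, happ]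
  linarith [hlow]

lemma newman {E : Type*} [NormedAddCommGroup E] [NormedSpace ℂ E] [CompleteSpace E]
    (h : ℂ → E) (δ C : ℝ) (hδ : 0 < δ) (hC : 0 ≤ C)
    (han : DifferentiableOn ℂ h (ball (0:ℂ) δ))
    (hb : ∀ ζ ∈ ball (0:ℂ) δ, ζ.re ≠ 0 → ‖h ζ‖ ≤ C / |ζ.re|)
    {w : ℂ} (hw : w ∈ ball (0:ℂ) (δ/4)) : ‖h w‖ ≤ 11 * C / δ := by
  have hwn : ‖w‖ < δ / 4 := by
    simpa [Complex.dist_eq] using mem_ball.mp hw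
  set R : ℝ := δ / 2 with hR
  have hRpos : 0 < R := by positivity
  set w' : ℂ := (w.im : ℝ) * Complex.I with hw'
  have hw're : w'.re = 0 := by simp [hw']
  have hw'im : w'.im = w.im := by simp [hw']
  have hww' : w - w' = (w.re : ℂ) := by
    apply Complex.ext <;> simp [hw']
  have habs_ww' : ‖w - w'‖ ≤ ‖w‖ := by
    rw [hww']
    simpa using Complex.abs_re_le_norm w
  -- the closed ball around w' is inside ball 0 δ
  have hsub : closedBall w' R ⊆ ball (0:ℂ) δ := by
    intro ζ hζ
    rw [mem_closedBall, Complex.dist_eq] at hζ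
    rw [mem_ball, Complex.dist_eq, sub_zero]
    have h1 : ‖w'‖ ≤ ‖w‖ := by
      rw [hw']
      simpa using Complex.abs_im_le_norm w
    calc ‖ζ‖ ≤ ‖ζ - w'‖ + ‖w'‖ := by
          simpa using norm_add_le (ζ - w') w'
      _ ≤ R + δ / 4 := add_le_add hζ (h1.trans hwn.le)
      _ < δ := by rw [hR]; linarith
  set φ : ℂ → E := fun ζ => (1 + ((ζ - w')/(R:ℂ))^2) • h ζ with hφ
  have hφdiff : DifferentiableOn ℂ φ (ball (0:ℂ) δ) := by
    apply DifferentiableOn.smul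
    · apply DifferentiableOn.add (differentiableOn_const _)
      apply DifferentiableOn.pow
      exact (differentiableOn_id.sub (differentiableOn_const _)).div_const _
    · exact han
  have hφdc : DiffContOnCl ℂ φ (ball w' R) := by
    apply DifferentiableOn.diffContOnCl
    rw [closure_ball w' hRpos.ne']
    exact hφdiff.mono hsub
  have hwmem : w ∈ ball w' R := by
    rw [mem_ball, Complex.dist_eq]
    calc ‖w - w'‖ ≤ ‖w‖ := habs_ww'
      _ < δ / 4 := hwn
      _ < R := by rw [hR]; linarith
  have hcau := hφdc.circleIntegral_sub_inv_smul hwmem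
  -- bound on the circle
  have hbound : ∀ ζ ∈ sphere w' R, ‖(ζ - w)⁻¹ • φ ζ‖ ≤ 16 * C / δ^2 := by
    intro ζ hζ
    rw [mem_sphere, Complex.dist_eq] at hζ
    have hζw : δ / 4 ≤ ‖ζ - w‖ := by
      have h3 : ‖ζ - w'‖ ≤ ‖ζ - w‖ + ‖w - w'‖ := by
        simpa using norm_add_le (ζ - w) (w - w')
      have h2 : ‖w - w'‖ < δ / 4 := lt_of_le_of_lt habs_ww' hwn
      rw [hζ] at h3
      linarith [hR ▸ h3]
    have hζball : ζ ∈ ball (0:ℂ) δ :=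
      hsub (by rw [mem_closedBall, Complex.dist_eq, hζ])
    rw [norm_smul, norm_inv]
    rcases eq_or_ne ζ.re 0 with hre | hre
    · -- weight vanishes
      have hure : (ζ - w').re = 0 := by rw [Complex.sub_re, hre, hw're, sub_zero]
      have him2 : (ζ - w').im^2 = R^2 := by
        have h4 := Complex.sq_norm (ζ - w')
        rw [hζ, Complex.normSq_apply, hure] at h4
        nlinarith
      have hsq : ((ζ - w') : ℂ)^2 = ((-(R^2) : ℝ) : ℂ) := by
        have him : (ζ - w') = ((ζ - w').im : ℂ) * Complex.I := by
          apply Complex.ext <;> simp [hure]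
        rw [him, mul_pow, Complex.I_sq, ← Complex.ofReal_pow, him2]
        push_cast
        ring
      have hu2 : ((ζ - w')/(R:ℂ))^2 = -1 := by
        rw [div_pow, hsq, div_eq_iff (pow_ne_zero 2 (by exact_mod_cast hRpos.ne' : ((R:ℂ)) ≠ 0))]
        push_cast
        ring
      have hz : φ ζ = 0 := by rw [hφ]; simp [hu2]
      rw [hz, norm_zero, mul_zero]
      positivity
    · -- weight bounded by 2|Re ζ|/R
      have hbh : ‖h ζ‖ ≤ C / |ζ.re| := hb ζ hζball hre
      have hv : ‖(ζ - w')/(R:ℂ)‖ = 1 := by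
        rw [norm_div, hζ]
        simp [Complex.norm_real, abs_of_pos hRpos, div_self hRpos.ne']
      set v : ℂ := (ζ - w')/(R:ℂ) with hvdef
      have hvre : v.re = ζ.re / R := by
        rw [hvdef, Complex.div_ofReal_re, Complex.sub_re, hw're, sub_zero]
      have hw1 : 1 + v^2 = v * (v + (starRingEnd ℂ) v) := by
        have hvc : v * (starRingEnd ℂ) v = 1 := by
          rw [Complex.mul_conj]
          norm_cast
          rw [← Complex.sq_norm, hv]; norm_num
        rw [mul_add, hvc, sq, add_comm]
      have habsw : ‖1 + v^2‖ = 2 * |ζ.re| / R := by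
        rw [hw1, norm_mul, hv, one_mul, Complex.add_conj]
        rw [Complex.norm_real, Real.norm_eq_abs, hvre]
        rw [abs_mul, abs_div, abs_of_pos hRpos]
        norm_num
        ring
      have hφn : ‖φ ζ‖ ≤ 2 * C / R := by
        rw [hφ]
        simp only []
        rw [norm_smul]
        calc ‖1 + v^2‖ * ‖h ζ‖ ≤ (2 * |ζ.re| / R) * (C / |ζ.re|) := by
              rw [habsw]
              exact mul_le_mul_of_nonneg_left hbh (by positivity)
          _ = 2 * C / R := by
              field_simp
      calc ‖ζ - w‖⁻¹ * ‖φ ζ‖ ≤ (δ/4)⁻¹ * (2 * C / R) := by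
            apply mul_le_mul
            · exact inv_anti₀ (by positivity) hζw
            · exact hφn
            · exact norm_nonneg _
            · positivity
        _ = 16 * C / δ^2 := by
            rw [hR]
            field_simp
            ring
  -- integrate
  have hint := circleIntegral.norm_integral_le_of_norm_le_const (le_of_lt hRpos) hbound
  rw [hcau] at hint
  have h2pi : ‖(2 * (Real.pi:ℂ) * Complex.I) • φ w‖ = 2 * Real.pi * ‖φ w‖ := by
    rw [norm_smul]
    simp [Complex.norm_two, abs_of_pos Real.pi_pos]
  rw [h2pi] at hint
  have hφwle : ‖φ w‖ ≤ 8 * C / δ := by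
    have hπ : 0 < 2 * Real.pi := by positivity
    have : 2 * Real.pi * ‖φ w‖ ≤ 2 * Real.pi * R * (16 * C / δ^2) := hint
    have h8 : 2 * Real.pi * R * (16 * C / δ^2) = 2 * Real.pi * (8 * C / δ) := by
      rw [hR]; field_simp; ring
    rw [h8] at this
    exact le_of_mul_le_mul_left this hπ
  -- weight at w has modulus ≥ 1
  have hwre : ((w - w')/(R:ℂ)) = ((w.re / R : ℝ) : ℂ) := by
    rw [hww']
    push_cast
    ring
  have hcw : ‖1 + ((w - w')/(R:ℂ))^2‖ = 1 + (w.re / R)^2 := by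
    rw [hwre]
    rw [show (1 + ((w.re / R : ℝ) : ℂ)^2) = ((1 + (w.re / R)^2 : ℝ) : ℂ) by push_cast; ring, Complex.norm_real, Real.norm_eq_abs]
    exact _root_.abs_of_pos (by positivity)
  have hφw : ‖φ w‖ = (1 + (w.re / R)^2) * ‖h w‖ := by
    rw [hφ]
    simp only []
    rw [norm_smul, hcw]
  have hge1 : (1:ℝ) ≤ 1 + (w.re / R)^2 := by nlinarith [sq_nonneg (w.re / R)]
  have : ‖h w‖ ≤ ‖φ w‖ := by
    rw [hφw]
    nlinarith [norm_nonneg (h w)]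
  calc ‖h w‖ ≤ 8 * C / δ := this.trans hφwle
    _ ≤ 11 * C / δ := by
        gcongr
        linarith

lemma differentiableAt_resolvent_apply (g : Linf X) {lam : ℂ} (h : ‖lam‖ ≠ 1) :
    DifferentiableAt ℂ (fun z => resolvent (transOp X) z g) lam := by
  have hd : DifferentiableAt ℂ (resolvent (transOp X)) lam :=
    (spectrum.hasDerivAt_resolvent (mem_resolventSet X lam h)).differentiableAt
  exact (ContinuousLinearMap.apply ℂ (Linf X) g).differentiableAt.comp lam hd

lemma exp_abs_lower (x : ℝ) (hx : |x| ≤ 1) : |x| / Real.exp 1 ≤ |Real.exp x - 1| := by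
  have he1 : (1:ℝ) ≤ Real.exp 1 := by
    have := Real.add_one_le_exp 1; linarith
  have hepos : (0:ℝ) < Real.exp 1 := Real.exp_pos 1
  rcases le_or_gt 0 x with hx0 | hx0
  · have h1 : x + 1 ≤ Real.exp x := Real.add_one_le_exp x
    have h2 : (1:ℝ) ≤ Real.exp x := by
      rw [← Real.exp_zero]
      exact Real.exp_le_exp.mpr hx0
    rw [_root_.abs_of_nonneg hx0, _root_.abs_of_nonneg (by linarith : (0:ℝ) ≤ Real.exp x - 1)]
    rw [div_le_iff₀ hepos]
    nlinarith
  · have h1 : -x + 1 ≤ Real.exp (-x) := Real.add_one_le_exp (-x)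
    have h2 : Real.exp x < 1 := by
      rw [← Real.exp_zero]
      exact Real.exp_lt_exp.mpr hx0
    have h3 : Real.exp (-1) ≤ Real.exp x := Real.exp_le_exp.mpr (by
      rw [_root_.abs_of_neg hx0] at hx; linarith)
    rw [_root_.abs_of_neg hx0, _root_.abs_of_neg (by linarith : Real.exp x - 1 < 0)]
    rw [div_le_iff₀ hepos]
    have hinv : Real.exp (-1) = (Real.exp 1)⁻¹ := Real.exp_neg 1
    have hprod : Real.exp x * Real.exp (-x) = 1 := by
      rw [← Real.exp_add]; simp
    -- 1 - exp x = exp x (exp(-x) - 1) ≥ exp x * (-x) ≥ exp(-1) * (-x)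
    have h4 : Real.exp x * (-x) ≤ Real.exp x * (Real.exp (-x) - 1) := by
      have := Real.exp_pos x
      nlinarith
    have h5 : Real.exp x * (Real.exp (-x) - 1) = 1 - Real.exp x := by
      rw [mul_sub, hprod]; ring
    have h6 : Real.exp (-1) * (-x) ≤ Real.exp x * (-x) := by
      have : (0:ℝ) ≤ -x := by linarith
      exact mul_le_mul_of_nonneg_right h3 this
    have h7 : -x * (Real.exp 1)⁻¹ * Real.exp 1 = -x := by
      field_simp
    calc -x = -x * (Real.exp 1)⁻¹ * Real.exp 1 := h7.symm
      _ = Real.exp (-1) * (-x) * Real.exp 1 := by rw [hinv]; ring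
      _ ≤ Real.exp x * (-x) * Real.exp 1 := by
          exact mul_le_mul_of_nonneg_right h6 hepos.le
      _ ≤ (1 - Real.exp x) * Real.exp 1 := by
          rw [← h5]
          exact mul_le_mul_of_nonneg_right h4 hepos.le
      _ = -(Real.exp x - 1) * Real.exp 1 := by ring

lemma key_bound (ρ : ℝ) (hρ : 0 < ρ) (hρ1 : ρ ≤ 1) :
    ∃ ε : ℝ, 0 < ε ∧ ε ≤ ρ ∧ ∃ K : ℝ, 0 ≤ K ∧
    ∀ (ξ₀ : ℂ), ‖ξ₀‖ = 1 → ∀ (g : Linf X) (F : ℂ → Linf X),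
      DifferentiableOn ℂ F (ball ξ₀ ρ) →
      (∀ lam ∈ ball ξ₀ ρ, ‖lam‖ ≠ 1 → F lam = resolvent (transOp X) lam g) →
      ∀ w ∈ ball ξ₀ ε, ‖F w‖ ≤ K * ‖g‖ := by
  set δ : ℝ := ρ / 3 with hδdef
  have hδpos : 0 < δ := by positivity
  have hδ4 : 0 < δ / 4 := by positivity
  have hlog : ContinuousAt Complex.log 1 := continuousAt_clog Complex.one_mem_slitPlane
  rw [Metric.continuousAt_iff] at hlog
  obtain ⟨ε₁, hε₁pos, hε₁⟩ := hlog (δ/4) hδ4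
  refine ⟨min (min ε₁ (1/2)) ρ, by positivity, min_le_right _ _,
    11 * Real.exp 1 / δ, by positivity, ?_⟩
  intro ξ₀ hξ₀ g F hF hFr w hwmem
  have hξ₀ne : ξ₀ ≠ 0 := by
    intro h0; rw [h0, norm_zero] at hξ₀; norm_num at hξ₀
  set h : ℂ → Linf X := fun ζ => F (ξ₀ * Complex.exp ζ) with hh
  have hmap : ∀ ζ ∈ ball (0:ℂ) δ, ξ₀ * Complex.exp ζ ∈ ball ξ₀ ρ := by
    intro ζ hζ
    rw [mem_ball, Complex.dist_eq] at hζ ⊢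
    rw [sub_zero] at hζ
    have : ξ₀ * Complex.exp ζ - ξ₀ = ξ₀ * (Complex.exp ζ - 1) := by ring
    rw [this, norm_mul]
    have habs : ‖ξ₀‖ = 1 := hξ₀
    rw [habs, one_mul]
    have hζ1 : ‖ζ‖ ≤ 1 := by
      have : δ ≤ 1 := by rw [hδdef]; linarith
      linarith
    calc ‖Complex.exp ζ - 1‖ ≤ 2 * ‖ζ‖ := Complex.norm_exp_sub_one_le hζ1
      _ < 2 * δ := by linarith
      _ < ρ := by rw [hδdef]; linarith
  have hdiff : DifferentiableOn ℂ h (ball (0:ℂ) δ) := by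
    apply DifferentiableOn.comp hF ?_ hmap
    exact ((differentiable_const ξ₀).mul Complex.differentiable_exp).differentiableOn
  have hb : ∀ ζ ∈ ball (0:ℂ) δ, ζ.re ≠ 0 → ‖h ζ‖ ≤ (Real.exp 1 * ‖g‖) / |ζ.re| := by
    intro ζ hζ hre
    have hmem := hmap ζ hζ
    have hnorm : ‖ξ₀ * Complex.exp ζ‖ = Real.exp ζ.re := by
      rw [norm_mul, hξ₀, one_mul, Complex.norm_exp]
    have hne1 : ‖ξ₀ * Complex.exp ζ‖ ≠ 1 := by
      rw [hnorm]
      intro hc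
      exact hre (Real.exp_eq_exp.mp (by rwa [Real.exp_zero]) )
    rw [hh]
    simp only []
    rw [hFr _ hmem hne1]
    have hres := norm_resolvent_apply_le X _ hne1 g
    rw [hnorm] at hres
    have hre1 : |ζ.re| ≤ 1 := by
      have h1 : |ζ.re| ≤ ‖ζ‖ := Complex.abs_re_le_norm ζ
      have h2 : ‖ζ‖ < δ := by
        rw [mem_ball, Complex.dist_eq, sub_zero] at hζ; exact hζ
      have : δ ≤ 1 := by rw [hδdef]; linarith
      linarith
    have hlower := exp_abs_lower ζ.re hre1
    have hrepos : 0 < |ζ.re| := abs_pos.mpr hre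
    have hdenpos : 0 < |Real.exp ζ.re - 1| := by
      have : Real.exp ζ.re ≠ 1 := fun hc => hre (Real.exp_eq_exp.mp (by rwa [Real.exp_zero]) )
      exact abs_pos.mpr (sub_ne_zero.mpr this)
    calc ‖resolvent (transOp X) (ξ₀ * Complex.exp ζ) g‖ ≤ ‖g‖ / |Real.exp ζ.re - 1| := hres
      _ ≤ ‖g‖ / (|ζ.re| / Real.exp 1) := by
          apply div_le_div_of_nonneg_left (norm_nonneg g) (by positivity) hlower
      _ = (Real.exp 1 * ‖g‖) / |ζ.re| := by
          field_simp
  -- apply newman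
  have hnew := fun (ζ : ℂ) (hζ : ζ ∈ ball (0:ℂ) (δ/4)) =>
    newman h δ (Real.exp 1 * ‖g‖) hδpos (by positivity) hdiff hb hζ
  -- transfer to w
  have hz : w / ξ₀ ≠ 0 ∧ dist (w / ξ₀) 1 < ε₁ ∧ ξ₀ * (w / ξ₀) = w := by
    have hd : dist (w / ξ₀) 1 = dist w ξ₀ := by
      rw [Complex.dist_eq, Complex.dist_eq]
      have : w / ξ₀ - 1 = (w - ξ₀) / ξ₀ := by field_simp
      rw [this, norm_div]
      have habs : ‖ξ₀‖ = 1 := hξ₀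
      rw [habs, div_one]
    have hwd : dist w ξ₀ < min (min ε₁ (1/2)) ρ := mem_ball.mp hwmem
    have h1 : dist (w / ξ₀) 1 < ε₁ := by
      rw [hd]
      exact hwd.trans_le ((min_le_left _ _).trans (min_le_left _ _))
    have h2 : dist (w / ξ₀) 1 < 1/2 := by
      rw [hd]
      exact hwd.trans_le ((min_le_left _ _).trans (min_le_right _ _))
    refine ⟨?_, h1, mul_div_cancel₀ w hξ₀ne⟩
    intro h0
    rw [h0] at h2
    rw [dist_comm, Complex.dist_eq, sub_zero] at h2
    norm_num at h2
  obtain ⟨hzne, hzd, hzw⟩ := hz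
  have hζmem : Complex.log (w / ξ₀) ∈ ball (0:ℂ) (δ/4) := by
    rw [mem_ball]
    have := hε₁ hzd
    rwa [Complex.log_one] at this
  have hval : h (Complex.log (w / ξ₀)) = F w := by
    rw [hh]
    simp only []
    rw [Complex.exp_log hzne, hzw]
  have := hnew _ hζmem
  rw [hval] at this
  calc ‖F w‖ ≤ 11 * (Real.exp 1 * ‖g‖) / δ := this
    _ = 11 * Real.exp 1 / δ * ‖g‖ := by ring

lemma res_ext_agree (g : Linf X) {O : Set ℂ} (hO : IsOpen O) {F F' : ℂ → Linf X}
    (hF : ContinuousOn F O) (hF' : ContinuousOn F' O)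
    (h1 : ∀ lam ∈ O, ‖lam‖ ≠ 1 → F lam = resolvent (transOp X) lam g)
    (h2 : ∀ lam ∈ O, ‖lam‖ ≠ 1 → F' lam = resolvent (transOp X) lam g) :
    Set.EqOn F F' O := by
  intro lam hlam
  by_cases hn : ‖lam‖ = 1
  swap
  · rw [h1 lam hlam hn, h2 lam hlam hn]
  · set D : Set ℂ := {z ∈ O | ‖z‖ ≠ 1} with hD
    have hDsub : D ⊆ O := fun z hz => hz.1
    have hmemcl : lam ∈ closure D := by
      rw [Metric.mem_closure_iff]
      intro s hs
      obtain ⟨s', hs', hsub⟩ := Metric.isOpen_iff.mp hO lam hlam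
      set c : ℝ := min (s/2) (s'/2) with hc
      have hcpos : 0 < c := by positivity
      refine ⟨lam * (1 + (c:ℂ)), ⟨hsub ?_, ?_⟩, ?_⟩
      · rw [mem_ball, Complex.dist_eq]
        have : lam * (1 + (c:ℂ)) - lam = lam * (c:ℂ) := by ring
        rw [this, norm_mul]
        have hl1 : ‖lam‖ = 1 := hn
        rw [hl1, one_mul, Complex.norm_real, Real.norm_eq_abs, _root_.abs_of_pos hcpos]
        calc c ≤ s'/2 := min_le_right _ _
          _ < s' := by linarith
      · rw [norm_mul]
        have hl1 : ‖lam‖ = 1 := hn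
        rw [hl1, one_mul]
        have : ‖(1 + (c:ℂ))‖ = 1 + c := by
          rw [show (1 + (c:ℂ)) = (((1+c : ℝ)):ℂ) by push_cast; ring]
          rw [Complex.norm_real, Real.norm_eq_abs, _root_.abs_of_pos (by linarith)]
        rw [this]
        intro hcon
        linarith
      · rw [Complex.dist_eq]
        have : lam - lam * (1 + (c:ℂ)) = -(lam * (c:ℂ)) := by ring
        rw [this, norm_neg, norm_mul]
        have hl1 : ‖lam‖ = 1 := hn
        rw [hl1, one_mul, Complex.norm_real, Real.norm_eq_abs, _root_.abs_of_pos hcpos]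
        calc c ≤ s/2 := min_le_left _ _
          _ < s := by linarith
    have hne : (nhdsWithin lam D).NeBot := mem_closure_iff_nhdsWithin_neBot.mp hmemcl
    have ht1 : Filter.Tendsto F (nhdsWithin lam D) (nhds (F lam)) :=
      (hF lam hlam).mono_left (nhdsWithin_mono lam hDsub)
    have ht2 : Filter.Tendsto F' (nhdsWithin lam D) (nhds (F' lam)) :=
      (hF' lam hlam).mono_left (nhdsWithin_mono lam hDsub)
    have heq : ∀ z ∈ D, F z = F' z := by
      intro z hz
      rw [h1 z hz.1 hz.2, h2 z hz.1 hz.2]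
    have ht1' : Filter.Tendsto F' (nhdsWithin lam D) (nhds (F lam)) := by
      apply ht1.congr'
      filter_upwards [self_mem_nhdsWithin] with z hz
      exact heq z hz
    exact tendsto_nhds_unique ht1' ht2

lemma glue_ext (g : Linf X) {Λ : Set ℂ} (hspec : circSpec X g ⊆ Λ) (ξ₀ : ℂ) (r : ℝ)
    (hdisj : ∀ lam ∈ ball ξ₀ r, lam ∉ Λ) :
    ∃ F : ℂ → Linf X, DifferentiableOn ℂ F (ball ξ₀ r) ∧
      ∀ lam, ‖lam‖ ≠ 1 → F lam = resolvent (transOp X) lam g := by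
  classical
  set A : Set ℂ := {ξ | ‖ξ‖ = 1 ∧ ξ ∈ ball ξ₀ r} with hA
  have hex : ∀ ξ : ℂ, ∃ (U : Set ℂ) (Fl : ℂ → Linf X), ξ ∈ A →
      IsOpen U ∧ ξ ∈ U ∧ AnalyticOnNhd ℂ Fl U ∧
        ∀ lam ∈ U, ‖lam‖ ≠ 1 → Fl lam = resolvent (transOp X) lam g := by
    intro ξ
    by_cases hξ : ξ ∈ A
    · have hnotin : ξ ∉ circSpec X g := fun hc => hdisj ξ hξ.2 (hspec hc)
      rw [circSpec, Set.mem_setOf_eq] at hnotin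
      push_neg at hnotin
      obtain ⟨U, Fl, hUo, hmem, han, hres⟩ := hnotin hξ.1
      exact ⟨U, Fl, fun _ => ⟨hUo, hmem, han, hres⟩⟩
    · exact ⟨∅, fun _ => 0, fun h => absurd h hξ⟩
  choose Uc Fc hUc using hex
  set F : ℂ → Linf X := fun lam =>
    if h : ∃ ξ, ξ ∈ A ∧ lam ∈ Uc ξ then Fc h.choose lam
    else resolvent (transOp X) lam g with hFdef
  have hFres : ∀ lam : ℂ, ‖lam‖ ≠ 1 → F lam = resolvent (transOp X) lam g := by
    intro lam hn
    have hrfl : F lam = if h : ∃ ξ, ξ ∈ A ∧ lam ∈ Uc ξ then Fc h.choose lam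
        else resolvent (transOp X) lam g := rfl
    rw [hrfl]
    by_cases h : ∃ ξ, ξ ∈ A ∧ lam ∈ Uc ξ
    · rw [dif_pos h]
      obtain ⟨hA1, hA2⟩ := h.choose_spec
      exact (hUc _ hA1).2.2.2 lam hA2 hn
    · rw [dif_neg h]
  refine ⟨F, ?_, hFres⟩
  intro lam hlam
  by_cases hn : ‖lam‖ = 1
  · -- lam is on the circle inside the ball
    have hlamA : lam ∈ A := ⟨hn, hlam⟩
    obtain ⟨hUo, hmem, han, hres⟩ := hUc lam hlamA
    have heqOn : Set.EqOn F (Fc lam) (Uc lam) := by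
      intro z hz
      have hexz : ∃ ξ, ξ ∈ A ∧ z ∈ Uc ξ := ⟨lam, hlamA, hz⟩
      have hrfl : F z = if h : ∃ ξ, ξ ∈ A ∧ z ∈ Uc ξ then Fc h.choose z
          else resolvent (transOp X) z g := rfl
      rw [hrfl, dif_pos hexz]
      obtain ⟨hB1, hB2⟩ := hexz.choose_spec
      obtain ⟨hUo', hmem', han', hres'⟩ := hUc _ hB1
      exact res_ext_agree X g (hUo'.inter hUo)
        ((han'.continuousOn).mono Set.inter_subset_left)
        ((han.continuousOn).mono Set.inter_subset_right)
        (fun w hw hwn => hres' w hw.1 hwn)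
        (fun w hw hwn => hres w hw.2 hwn) ⟨hB2, hz⟩
    have hda : DifferentiableAt ℂ F lam := by
      have h1 : DifferentiableAt ℂ (Fc lam) lam := (han lam hmem).differentiableAt
      apply h1.congr_of_eventuallyEq
      filter_upwards [hUo.mem_nhds hmem] with z hz
      exact heqOn hz
    exact hda.differentiableWithinAt
  · -- off the circle: F agrees with the resolvent near lam
    have hopen : IsOpen {z : ℂ | ‖z‖ ≠ 1} := isOpen_ne_fun continuous_norm continuous_const
    have hda : DifferentiableAt ℂ F lam := by
      apply (differentiableAt_resolvent_apply X g hn).congr_of_eventuallyEq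
      filter_upwards [hopen.mem_nhds hn] with z hz
      exact hFres z hz
    exact hda.differentiableWithinAt

lemma spec_limit (g : ℕ → Linf X) (glim : Linf X)
    (hconv : Filter.Tendsto g Filter.atTop (nhds glim))
    {Λ : Set ℂ} (hclosed : IsClosed Λ) (hΛ : Λ ⊆ Metric.sphere (0:ℂ) 1)
    (hspec : ∀ n, circSpec X (g n) ⊆ Λ) : circSpec X glim ⊆ Λ := by
  intro ξ₀ hξ₀
  by_contra hnot
  obtain ⟨hξnorm, hnoext⟩ := hξ₀
  have hrex : ∃ r : ℝ, 0 < r ∧ r ≤ 1 ∧ ∀ lam ∈ ball ξ₀ r, lam ∉ Λ := by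
    have hmem : Λᶜ ∈ nhds ξ₀ := hclosed.isOpen_compl.mem_nhds hnot
    obtain ⟨r0, hr0, hsub⟩ := Metric.mem_nhds_iff.mp hmem
    refine ⟨min r0 1, by positivity, min_le_right _ _, ?_⟩
    intro lam hlam
    exact hsub (mem_ball.mpr ((mem_ball.mp hlam).trans_le (min_le_left _ _)))
  obtain ⟨r, hr, hr1, hdisj⟩ := hrex
  choose F hFdiff hFres using fun n => glue_ext X (g n) (hspec n) ξ₀ r hdisj
  obtain ⟨ε, hε, hερ, K, hK, hbound⟩ := key_bound X r hr hr1
  -- uniform Cauchy on ball ξ₀ ε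
  have hcauchy : CauchySeq g := hconv.cauchySeq
  have hkey : ∀ m n : ℕ, ∀ x ∈ ball ξ₀ ε, ‖F m x - F n x‖ ≤ K * ‖g m - g n‖ := by
    intro m n x hx
    apply hbound ξ₀ hξnorm (g m - g n) (fun z => F m z - F n z)
      ((hFdiff m).sub (hFdiff n)) ?_ x hx
    intro lam hlam hn
    show F m lam - F n lam = _
    rw [hFres m lam hn, hFres n lam hn, map_sub]
  have hUC : UniformCauchySeqOn (fun n x => F n x) Filter.atTop (ball ξ₀ ε) := by
    rw [Metric.uniformCauchySeqOn_iff]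
    intro η hη
    have hKη : 0 < η / (K + 1) := by positivity
    obtain ⟨N, hN⟩ := Metric.cauchySeq_iff.mp hcauchy (η / (K + 1)) hKη
    refine ⟨N, fun m hm n hn x hx => ?_⟩
    rw [dist_eq_norm]
    calc ‖F m x - F n x‖ ≤ K * ‖g m - g n‖ := hkey m n x hx
      _ ≤ K * (η / (K + 1)) := by
          apply mul_le_mul_of_nonneg_left _ hK
          rw [← dist_eq_norm]
          exact (hN m hm n hn).le
      _ < η := by
          rw [div_eq_inv_mul, ← mul_assoc]
          have h1 : K * (K + 1)⁻¹ < 1 := by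
            rw [mul_inv_lt_iff₀ (by positivity), one_mul]
            linarith
          nlinarith
  have hpt : ∀ x : ℂ, ∃ y : Linf X, x ∈ ball ξ₀ ε →
      Filter.Tendsto (fun n => F n x) Filter.atTop (nhds y) := by
    intro x
    by_cases hx : x ∈ ball ξ₀ ε
    · have hcs : CauchySeq (fun n => F n x) := by
        rw [Metric.cauchySeq_iff]
        intro η hη
        obtain ⟨N, hN⟩ := Metric.uniformCauchySeqOn_iff.mp hUC η hη
        exact ⟨N, fun m hm n hn => hN m hm n hn x hx⟩
      obtain ⟨y, hy⟩ := cauchySeq_tendsto_of_complete hcs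
      exact ⟨y, fun _ => hy⟩
    · exact ⟨0, fun h => absurd h hx⟩
  choose Flim hFlim using hpt
  have hTU : TendstoUniformlyOn (fun n x => F n x) Flim Filter.atTop (ball ξ₀ ε) :=
    hUC.tendstoUniformlyOn_of_tendsto (fun x hx => hFlim x hx)
  have hdiff : DifferentiableOn ℂ Flim (ball ξ₀ ε) := by
    apply hTU.tendstoLocallyUniformlyOn.differentiableOn ?_ isOpen_ball
    exact Filter.Eventually.of_forall fun n => (hFdiff n).mono (ball_subset_ball hερ)
  have hresl : ∀ lam ∈ ball ξ₀ ε, ‖lam‖ ≠ 1 → Flim lam = resolvent (transOp X) lam glim := by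
    intro lam hlam hn
    have h1 : Filter.Tendsto (fun n => F n lam) Filter.atTop (nhds (Flim lam)) := hFlim lam hlam
    have h2 : Filter.Tendsto (fun n => resolvent (transOp X) lam (g n)) Filter.atTop
        (nhds (resolvent (transOp X) lam glim)) :=
      ((resolvent (transOp X) lam).continuous.tendsto glim).comp hconv
    have h3 : (fun n => F n lam) = fun n => resolvent (transOp X) lam (g n) := by
      funext n
      exact hFres n lam hn
    rw [h3] at h1
    exact tendsto_nhds_unique h1 h2
  exact hnoext ⟨ball ξ₀ ε, Flim, isOpen_ball, mem_ball_self hε,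
    (hdiff.analyticOnNhd isOpen_ball), hresl⟩

lemma norm_bcToLinf_sub_le (a b : ℝ →ᵇ X) : ‖bcToLinf X a - bcToLinf X b‖ ≤ dist a b := by
  rw [bcToLinf, bcToLinf, ← MemLp.toLp_sub]
  rw [Lp.norm_toLp]
  have hb : ∀ᵐ t : ℝ ∂volume, ‖(⇑a - ⇑b) t‖ ≤ dist a b := by
    filter_upwards with t
    have := BoundedContinuousFunction.dist_coe_le_dist (f := a) (g := b) t
    rw [dist_eq_norm] at this
    simpa using this
  have h1 : eLpNorm (⇑a - ⇑b) ⊤ volume ≤ ENNReal.ofReal (dist a b) := by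
    have := eLpNorm_le_of_ae_bound (μ := (volume : Measure ℝ)) (p := ⊤) hb
    simpa using this
  calc (eLpNorm (⇑a - ⇑b) ⊤ volume).toReal ≤ (ENNReal.ofReal (dist a b)).toReal :=
        ENNReal.toReal_mono ENNReal.ofReal_lt_top.ne h1
    _ = dist a b := ENNReal.toReal_ofReal dist_nonneg

lemma bcToLinf_tendsto {u : ℕ → ℝ →ᵇ X} {ulim : ℝ →ᵇ X}
    (h : Filter.Tendsto u Filter.atTop (nhds ulim)) :
    Filter.Tendsto (fun n => bcToLinf X (u n)) Filter.atTop (nhds (bcToLinf X ulim)) := by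
  rw [Metric.tendsto_atTop] at h ⊢
  intro η hη
  obtain ⟨N, hN⟩ := h η hη
  refine ⟨N, fun n hn => ?_⟩
  calc dist (bcToLinf X (u n)) (bcToLinf X ulim) = ‖bcToLinf X (u n) - bcToLinf X ulim‖ :=
        dist_eq_norm _ _
    _ ≤ dist (u n) ulim := norm_bcToLinf_sub_le X _ _
    _ < η := hN n hn

lemma evol_cont (E : EvolProcess X) (t : ℝ) (h : ℝ →ᵇ X) :
    ContinuousOn (fun ξ => E.U t ξ (h ξ)) {ξ : ℝ | ξ ≤ t} := by
  obtain ⟨N, ω, hN, hω, hbd⟩ := E.bound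
  intro ξ₀ hξ₀
  have hξ₀t : ξ₀ ≤ t := hξ₀
  set S : Set ℝ := {ξ : ℝ | ξ ≤ t} with hS
  set M : ℝ := N * Real.exp (ω * (t - ξ₀ + 1)) with hM
  have hMpos : 0 < M := by positivity
  -- second piece: fixed vector
  have h1 : Filter.Tendsto (fun ξ => E.U t ξ (h ξ₀)) (nhdsWithin ξ₀ S)
      (nhds (E.U t ξ₀ (h ξ₀))) := by
    have hc : ContinuousWithinAt (fun p : ℝ × ℝ => E.U p.1 p.2 (h ξ₀))
        {p : ℝ × ℝ | p.2 ≤ p.1} (t, ξ₀) := E.strongCont (h ξ₀) (t, ξ₀) hξ₀t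
    have hmap : Filter.Tendsto (fun ξ : ℝ => ((t, ξ) : ℝ × ℝ)) (nhdsWithin ξ₀ S)
        (nhdsWithin (t, ξ₀) {p : ℝ × ℝ | p.2 ≤ p.1}) := by
      rw [tendsto_nhdsWithin_iff]
      constructor
      · apply Filter.Tendsto.mono_left _ nhdsWithin_le_nhds
        exact (Continuous.tendsto (by continuity) ξ₀)
      · filter_upwards [self_mem_nhdsWithin] with ξ hξ
        exact hξ
    exact hc.tendsto.comp hmap
  -- first piece: varying vector tends to zero
  have h2 : Filter.Tendsto (fun ξ => E.U t ξ (h ξ) - E.U t ξ (h ξ₀)) (nhdsWithin ξ₀ S)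
      (nhds 0) := by
    have hb : ∀ᶠ ξ in nhdsWithin ξ₀ S, ‖E.U t ξ (h ξ) - E.U t ξ (h ξ₀)‖ ≤ M * ‖h ξ - h ξ₀‖ := by
      have hball : Metric.ball ξ₀ 1 ∈ nhdsWithin ξ₀ S :=
        nhdsWithin_le_nhds (Metric.ball_mem_nhds ξ₀ one_pos)
      filter_upwards [hball, self_mem_nhdsWithin] with ξ hb hmem
      have hξt : ξ ≤ t := hmem
      have hd : |ξ - ξ₀| < 1 := by
        rw [← Real.dist_eq]; exact mem_ball.mp hb
      have hop : ‖E.U t ξ‖ ≤ M := by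
        refine (hbd t ξ hξt).trans ?_
        rw [hM]
        have : ω * (t - ξ) ≤ ω * (t - ξ₀ + 1) := by
          have : ξ₀ - 1 < ξ := by
            have := abs_lt.mp hd; linarith
          nlinarith
        have hexp := Real.exp_le_exp.mpr this
        nlinarith [Real.exp_pos (ω * (t - ξ))]
      calc ‖E.U t ξ (h ξ) - E.U t ξ (h ξ₀)‖ = ‖E.U t ξ (h ξ - h ξ₀)‖ := by rw [map_sub]
        _ ≤ ‖E.U t ξ‖ * ‖h ξ - h ξ₀‖ := ContinuousLinearMap.le_opNorm _ _
        _ ≤ M * ‖h ξ - h ξ₀‖ := by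
            apply mul_le_mul_of_nonneg_right hop (norm_nonneg _)
    have hz : Filter.Tendsto (fun ξ => M * ‖h ξ - h ξ₀‖) (nhdsWithin ξ₀ S) (nhds 0) := by
      have hcont : Filter.Tendsto (fun ξ => h ξ) (nhdsWithin ξ₀ S) (nhds (h ξ₀)) :=
        (h.continuous.tendsto ξ₀).mono_left nhdsWithin_le_nhds
      have : Filter.Tendsto (fun ξ => ‖h ξ - h ξ₀‖) (nhdsWithin ξ₀ S) (nhds 0) := by
        have hsubt : Filter.Tendsto (fun ξ => h ξ - h ξ₀) (nhdsWithin ξ₀ S)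
            (nhds (h ξ₀ - h ξ₀)) :=
          hcont.sub tendsto_const_nhds
        rw [sub_self] at hsubt
        simpa using hsubt.norm
      have := this.const_mul M
      simpa using this
    exact squeeze_zero_norm' hb hz
  have hsum := h2.add h1
  rw [zero_add] at hsum
  have : (fun ξ => E.U t ξ (h ξ) - E.U t ξ (h ξ₀) + E.U t ξ (h ξ₀)) = fun ξ => E.U t ξ (h ξ) := by
    funext ξ; abel
  rwa [this] at hsum

/-- the mild-solution relation, together with the spectral constraint
`σ(·) ⊆ Λ`, is preserved under uniform limits (closedness of the operator `L` restricted to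
`{g ∈ BC(ℝ,X) : σ(g) ⊆ Λ}`). -/
theorem stmt18 (E : EvolProcess X) (Λ : Set ℂ) (hΛclosed : IsClosed Λ)
    (hΛ : Λ ⊆ Metric.sphere (0 : ℂ) 1)
    (u f : ℕ → ℝ →ᵇ X) (ulim flim : ℝ →ᵇ X)
    (huspec : ∀ n : ℕ, circSpec X (bcToLinf X (u n)) ⊆ Λ)
    (hfspec : ∀ n : ℕ, circSpec X (bcToLinf X (f n)) ⊆ Λ)
    (hmild : ∀ (n : ℕ) (s t : ℝ), s ≤ t →
      u n t = E.U t s (u n s) + ∫ ξ in s..t, E.U t ξ (f n ξ))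
    (huconv : Filter.Tendsto u Filter.atTop (nhds ulim))
    (hfconv : Filter.Tendsto f Filter.atTop (nhds flim)) :
    circSpec X (bcToLinf X ulim) ⊆ Λ ∧ circSpec X (bcToLinf X flim) ⊆ Λ ∧
      ∀ s t : ℝ, s ≤ t → ulim t = E.U t s (ulim s) + ∫ ξ in s..t, E.U t ξ (flim ξ) := by
  refine ⟨spec_limit X (fun n => bcToLinf X (u n)) (bcToLinf X ulim)
      (bcToLinf_tendsto X huconv) hΛclosed hΛ huspec,
    spec_limit X (fun n => bcToLinf X (f n)) (bcToLinf X flim)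
      (bcToLinf_tendsto X hfconv) hΛclosed hΛ hfspec, ?_⟩
  intro s t hst
  obtain ⟨N, ω, hN, hω, hbd⟩ := E.bound
  have hupt : Filter.Tendsto (fun n => u n t) Filter.atTop (nhds (ulim t)) :=
    (BoundedContinuousFunction.tendsto_iff_tendstoUniformly.mp huconv).tendsto_at t
  have hus : Filter.Tendsto (fun n => E.U t s (u n s)) Filter.atTop (nhds (E.U t s (ulim s))) :=
    ((E.U t s).continuous.tendsto _).comp
      ((BoundedContinuousFunction.tendsto_iff_tendstoUniformly.mp huconv).tendsto_at s)
  have hint : ∀ h : ℝ →ᵇ X, IntervalIntegrable (fun ξ => E.U t ξ (h ξ)) volume s t := by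
    intro h
    apply ContinuousOn.intervalIntegrable
    apply (evol_cont X E t h).mono
    rw [Set.uIcc_of_le hst]
    intro ξ hξ
    exact hξ.2
  have hIconv : Filter.Tendsto (fun n => ∫ ξ in s..t, E.U t ξ (f n ξ)) Filter.atTop
      (nhds (∫ ξ in s..t, E.U t ξ (flim ξ))) := by
    rw [Metric.tendsto_atTop] at hfconv ⊢
    intro η hη
    set C0 : ℝ := N * Real.exp (ω * (t - s)) * (t - s) + 1 with hC0
    have hC0pos : 0 < C0 := by
      have h1 : 0 ≤ t - s := by linarith
      have : 0 ≤ N * Real.exp (ω * (t - s)) * (t - s) := by positivity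
      linarith
    obtain ⟨N₀, hN₀⟩ := hfconv (η / C0) (by positivity)
    refine ⟨N₀, fun n hn => ?_⟩
    have hdist := hN₀ n hn
    have hdn : (0:ℝ) ≤ dist (f n) flim := dist_nonneg
    have hdiff_int : (∫ ξ in s..t, E.U t ξ (f n ξ)) - (∫ ξ in s..t, E.U t ξ (flim ξ))
        = ∫ ξ in s..t, E.U t ξ ((f n - flim) ξ) := by
      rw [← intervalIntegral.integral_sub (hint (f n)) (hint flim)]
      congr 1
      funext ξ
      simp [map_sub]
    have hptbd : ∀ ξ ∈ Set.uIoc s t, ‖E.U t ξ ((f n - flim) ξ)‖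
        ≤ N * Real.exp (ω * (t - s)) * dist (f n) flim := by
      intro ξ hξ
      rw [Set.uIoc_of_le hst] at hξ
      have hξt : ξ ≤ t := hξ.2
      have hop : ‖E.U t ξ‖ ≤ N * Real.exp (ω * (t - s)) := by
        refine (hbd t ξ hξt).trans ?_
        have h1 : ω * (t - ξ) ≤ ω * (t - s) := by nlinarith [hξ.1.le]
        have := Real.exp_le_exp.mpr h1
        nlinarith [Real.exp_pos (ω * (t - ξ))]
      have hvec : ‖(f n - flim) ξ‖ ≤ dist (f n) flim := by
        rw [dist_eq_norm]
        exact BoundedContinuousFunction.norm_coe_le_norm (f n - flim) ξ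
      calc ‖E.U t ξ ((f n - flim) ξ)‖ ≤ ‖E.U t ξ‖ * ‖(f n - flim) ξ‖ :=
            ContinuousLinearMap.le_opNorm _ _
        _ ≤ N * Real.exp (ω * (t - s)) * dist (f n) flim := by
            apply mul_le_mul hop hvec (norm_nonneg _) (by positivity)
    have hibd := intervalIntegral.norm_integral_le_of_norm_le_const hptbd
    rw [dist_eq_norm, hdiff_int]
    calc ‖∫ ξ in s..t, E.U t ξ ((f n - flim) ξ)‖
        ≤ N * Real.exp (ω * (t - s)) * dist (f n) flim * |t - s| := hibd
      _ = N * Real.exp (ω * (t - s)) * (t - s) * dist (f n) flim := by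
          rw [_root_.abs_of_nonneg (by linarith : (0:ℝ) ≤ t - s)]
          ring
      _ ≤ (C0 - 1) * dist (f n) flim := by
          have : N * Real.exp (ω * (t - s)) * (t - s) = C0 - 1 := by rw [hC0]; ring
          rw [this]
      _ < η := by
          have hlt : dist (f n) flim < η / C0 := hdist
          have hC1 : 0 ≤ C0 - 1 := by
            have h1 : 0 ≤ t - s := by linarith
            have : 0 ≤ N * Real.exp (ω * (t - s)) * (t - s) := by positivity
            rw [hC0]; linarith
          calc (C0 - 1) * dist (f n) flim ≤ (C0 - 1) * (η / C0) :=
                mul_le_mul_of_nonneg_left hlt.le hC1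
            _ < η := by
                rw [div_eq_inv_mul]
                have h2 : (C0 - 1) * (C0⁻¹ * η) = (C0 - 1) * C0⁻¹ * η := by ring
                rw [h2]
                have h3 : (C0 - 1) * C0⁻¹ < 1 := by
                  rw [mul_inv_lt_iff₀ hC0pos, one_mul]
                  linarith
                nlinarith
  have hrhs : Filter.Tendsto (fun n => E.U t s (u n s) + ∫ ξ in s..t, E.U t ξ (f n ξ))
      Filter.atTop (nhds (E.U t s (ulim s) + ∫ ξ in s..t, E.U t ξ (flim ξ))) :=
    hus.add hIconv
  have heq : (fun n => u n t) = fun n => E.U t s (u n s) + ∫ ξ in s..t, E.U t ξ (f n ξ) :=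
    funext fun n => hmild n s t hst
  rw [heq] at hupt
  exact tendsto_nhds_unique hupt hrhs


end
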